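/- Let ρ₂(r) = ((11/32)r² + (11/384)r⁴)/(1 + (1/3)r² + (11/384)r⁴) and r₀ = 2√(6(4+3√2)). Then ρ₂ attains a strict global maximum over (0,∞) at r₀, i.e. ρ₂(r) < ρ₂(r₀) for all r > 0 with r ≠ r₀, and moreover ρ₂(r₀) > 1. -/
import Mathlib


/-- The order-2 diagonal Padé approximant of the vortex density,
with coefficients `a₁ = 11/32`, `b₁ = 1/3`, `a₂ = 11/384`. -/
noncomputable def rho2 (r : ℝ) : ℝ :=
  ((11 / 32) * r ^ 2 + (11 / 384) * r ^ 4) / (1 + (1 / 3) * r ^ 2 + (11 / 384) * r ^ 4)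

/-- `r₀ = 2√(6(4+3√2)) ≈ 14.065`, the unique positive root of `r⁴ − 192r² − 1152`. -/
noncomputable def r0 : ℝ := 2 * Real.sqrt (6 * (4 + 3 * Real.sqrt 2))

/-- `ρ₂` attains a strict global maximum over `(0,∞)` at `r₀`, and `ρ₂(r₀) > 1`. -/
theorem stmt_7 :
    (∀ r : ℝ, 0 < r → r ≠ r0 → rho2 r < rho2 r0) ∧ 1 < rho2 r0 := by
  have hq : Real.sqrt 2 ^ 2 = 2 := Real.sq_sqrt (by norm_num)
  have hq0 : (0:ℝ) ≤ Real.sqrt 2 := Real.sqrt_nonneg 2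
  have hq1 : (1:ℝ) < Real.sqrt 2 := by nlinarith
  have hw : (Real.sqrt (6 * (4 + 3 * Real.sqrt 2))) ^ 2 = 6 * (4 + 3 * Real.sqrt 2) :=
    Real.sq_sqrt (by nlinarith)
  have hr0sq : r0 ^ 2 = 96 + 72 * Real.sqrt 2 := by
    have h4 : r0 ^ 2 = 4 * (Real.sqrt (6 * (4 + 3 * Real.sqrt 2))) ^ 2 := by
      unfold r0; ring
    rw [h4, hw]; ring
  have hr0pos : 0 < r0 := by
    unfold r0
    exact mul_pos (by norm_num) (Real.sqrt_pos.mpr (by nlinarith))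
  have hBpos : (0:ℝ) < 594 + 420 * Real.sqrt 2 := by linarith
  have hM : rho2 r0 = (594 + (1683/4) * Real.sqrt 2) / (594 + 420 * Real.sqrt 2) := by
    unfold rho2
    rw [show r0 ^ 4 = (r0 ^ 2) ^ 2 from by ring, hr0sq]
    have e1 : (11/32) * (96 + 72 * Real.sqrt 2) + (11/384) * (96 + 72 * Real.sqrt 2) ^ 2
        = 594 + (1683/4) * Real.sqrt 2 := by
      linear_combination (297/2) * hq
    have e2 : 1 + (1/3) * (96 + 72 * Real.sqrt 2) + (11/384) * (96 + 72 * Real.sqrt 2) ^ 2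
        = 594 + 420 * Real.sqrt 2 := by
      linear_combination (297/2) * hq
    rw [e1, e2]
  constructor
  · intro r hr hne
    have hDr : (0:ℝ) < 1 + (1/3) * r ^ 2 + (11/384) * r ^ 4 := by positivity
    have hrho : rho2 r = ((11/32) * r ^ 2 + (11/384) * r ^ 4) /
        (1 + (1/3) * r ^ 2 + (11/384) * r ^ 4) := rfl
    rw [hrho, hM, div_lt_div_iff₀ hDr hBpos]
    have hs : r ^ 2 ≠ 96 + 72 * Real.sqrt 2 := by
      intro h
      apply hne
      have h2 : r ^ 2 = r0 ^ 2 := by rw [hr0sq]; exact h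
      calc r = Real.sqrt (r ^ 2) := (Real.sqrt_sq hr.le).symm
        _ = Real.sqrt (r0 ^ 2) := by rw [h2]
        _ = r0 := Real.sqrt_sq hr0pos.le
    have hpos : 0 < (r ^ 2 - (96 + 72 * Real.sqrt 2)) ^ 2 :=
      pow_two_pos_of_ne_zero (sub_ne_zero.mpr hs)
    have key : (594 + (1683/4) * Real.sqrt 2) * (1 + (1/3) * r ^ 2 + (11/384) * r ^ 4)
        - ((11/32) * r ^ 2 + (11/384) * r ^ 4) * (594 + 420 * Real.sqrt 2)
        = (11 * Real.sqrt 2 / 512) * (r ^ 2 - (96 + 72 * Real.sqrt 2)) ^ 2 := by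
      linear_combination ((99/32) * r ^ 2 - 297 - (891/8) * Real.sqrt 2) * hq
    nlinarith [mul_pos (show (0:ℝ) < 11 * Real.sqrt 2 / 512 by positivity) hpos]
  · rw [hM, lt_div_iff₀ hBpos]
    nlinarith
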